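/- With h(λ) = g_λ(2λ/3) as above, h is continuous on (0,1), lim_{λ→0+} h(λ) = -1, lim_{λ→1-} h(λ) = H(2/3) - 1/3 > 0, and h is strictly concave; consequently, the equation h(λ) = 0 has a unique solution λ₀ in (0,1). -/

import Mathlib

/-- The binary entropy function. -/
noncomputable def binEnt (x : ℝ) : ℝ := -x * Real.logb 2 x - (1 - x) * Real.logb 2 (1 - x)

/-- `g_λ(α) = H(α) + (1-α)(H((λ-α)/(1-α)) - 1)`. -/
noncomputable def gFun (l a : ℝ) : ℝ := binEnt a + (1 - a) * (binEnt ((l - a) / (1 - a)) - 1)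

/-- `h(λ) = g_λ(2λ/3)`. -/
noncomputable def hFun (l : ℝ) : ℝ := gFun l (2 * l / 3)

lemma log2_pos : (0:ℝ) < Real.log 2 := Real.log_pos (by norm_num)

lemma binEnt_eq (x : ℝ) : binEnt x = Real.binEntropy x / Real.log 2 := by
  simp [binEnt, Real.binEntropy, Real.logb, Real.log_inv]
  ring

lemma binEnt_continuous : Continuous binEnt := by
  rw [show binEnt = fun x => Real.binEntropy x / Real.log 2 from funext binEnt_eq]
  exact Real.binEntropy_continuous.div_const _

lemma binEnt_zero : binEnt 0 = 0 := by simp [binEnt]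
lemma binEnt_one : binEnt 1 = 0 := by simp [binEnt]

lemma binEnt_half : binEnt (1/2) = 1 := by
  have h : (1:ℝ) - 1/2 = 1/2 := by norm_num
  rw [binEnt, h, Real.logb, show Real.log (1/2 : ℝ) = -Real.log 2 by
    rw [one_div, Real.log_inv]]
  field_simp
  norm_num

lemma binEnt_23 : binEnt (2/3) = Real.logb 2 3 - 2/3 := by
  have h : (1:ℝ) - 2/3 = 1/3 := by norm_num
  rw [binEnt, h, Real.logb, Real.logb, Real.logb,
    show Real.log (2/3 : ℝ) = Real.log 2 - Real.log 3 by
      rw [Real.log_div two_ne_zero three_ne_zero],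
    show Real.log (1/3 : ℝ) = -Real.log 3 by rw [one_div, Real.log_inv]]
  field_simp
  ring

lemma logb23_gt_one : 1 < Real.logb 2 3 := by
  rw [Real.logb]
  exact (one_lt_div log2_pos).mpr (Real.log_lt_log (by norm_num) (by norm_num))

lemma hFun_eq {l : ℝ} (hl0 : 0 < l) (hl1 : l < 1) :
    hFun l = binEnt l + l * Real.logb 2 3 - 1 := by
  have h3 : (0:ℝ) < 3 - 2 * l := by linarith
  have hb : (l - 2 * l / 3) / (1 - 2 * l / 3) = l / (3 - 2 * l) := by
    rw [div_eq_div_iff (by linarith) (by positivity)]; ring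
  have h1b : 1 - l / (3 - 2 * l) = (3 * (1 - l)) / (3 - 2 * l) := by
    rw [eq_div_iff h3.ne', sub_mul, div_mul_cancel₀ _ h3.ne']; ring
  have h1a : 1 - 2 * l / 3 = (3 - 2 * l) / 3 := by ring
  rw [hFun, gFun, hb, binEnt, binEnt, binEnt, h1b, h1a]
  rw [Real.logb, Real.logb, Real.logb, Real.logb, Real.logb, Real.logb, Real.logb]
  have hlne : l ≠ 0 := hl0.ne'
  have h3ne : (3:ℝ) - 2 * l ≠ 0 := h3.ne'
  have h1lne : (1:ℝ) - l ≠ 0 := ne_of_gt (by linarith)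
  have e1 : Real.log (2 * l / 3) = Real.log 2 + Real.log l - Real.log 3 := by
    rw [Real.log_div (mul_ne_zero two_ne_zero hlne) (by norm_num),
      Real.log_mul two_ne_zero hlne]
  have e2 : Real.log ((3 - 2 * l) / 3) = Real.log (3 - 2 * l) - Real.log 3 := by
    rw [Real.log_div h3ne (by norm_num)]
  have e3 : Real.log (l / (3 - 2 * l)) = Real.log l - Real.log (3 - 2 * l) := by
    rw [Real.log_div hlne h3ne]
  have e4 : Real.log (3 * (1 - l) / (3 - 2 * l)) = Real.log 3 + Real.log (1 - l) - Real.log (3 - 2 * l) := by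
    rw [Real.log_div (mul_ne_zero three_ne_zero h1lne) h3ne, Real.log_mul three_ne_zero h1lne]
  rw [e1, e2, e3, e4]
  field_simp
  ring

noncomputable def niceF (l : ℝ) : ℝ := binEnt l + l * Real.logb 2 3 - 1

lemma niceF_continuous : Continuous niceF :=
  ((binEnt_continuous.add (continuous_id.mul continuous_const)).sub continuous_const)

lemma strictConcaveOn_congr {s : Set ℝ} {f g : ℝ → ℝ} (h : StrictConcaveOn ℝ s f)
    (he : ∀ x ∈ s, f x = g x) : StrictConcaveOn ℝ s g := by
  refine ⟨h.1, fun x hx y hy hxy a b ha hb hab => ?_⟩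
  rw [← he x hx, ← he y hy, ← he _ (h.1 hx hy ha.le hb.le hab)]
  exact h.2 hx hy hxy ha hb hab

lemma strictConcaveOn_div {s : Set ℝ} {f : ℝ → ℝ} (h : StrictConcaveOn ℝ s f) {c : ℝ}
    (hc : 0 < c) : StrictConcaveOn ℝ s (fun x => f x / c) := by
  refine ⟨h.1, fun x hx y hy hxy a b ha hb hab => ?_⟩
  have H := h.2 hx hy hxy ha hb hab
  simp only [smul_eq_mul] at *
  rw [show a * (f x / c) + b * (f y / c) = (a * f x + b * f y) / c by ring]
  gcongr

lemma niceF_strictConcave : StrictConcaveOn ℝ (Set.Ioo (0:ℝ) 1) niceF := by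
  have h1 : StrictConcaveOn ℝ (Set.Ioo (0:ℝ) 1) binEnt := by
    have := (Real.strictConcave_binEntropy.subset Set.Ioo_subset_Icc_self (convex_Ioo 0 1))
    exact strictConcaveOn_congr (strictConcaveOn_div this log2_pos)
      (fun x _ => (binEnt_eq x).symm)
  have h2 : ConcaveOn ℝ (Set.Ioo (0:ℝ) 1) (fun l => l * Real.logb 2 3 - 1) := by
    refine ⟨convex_Ioo 0 1, fun x _ y _ a b ha hb hab => le_of_eq ?_⟩
    simp only [smul_eq_mul]
    nlinarith [hab]
  exact strictConcaveOn_congr (h1.add_concaveOn h2) (fun x _ => by simp [niceF]; ring)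


/-- `h` is continuous on `(0,1)`, tends to `-1` at `0⁺` and to
`H(2/3) - 1/3 > 0` at `1⁻`, is strictly concave, and consequently the
equation `h(λ) = 0` has a unique solution in `(0,1)`. -/
theorem hFun_unique_root :
    ContinuousOn hFun (Set.Ioo (0 : ℝ) 1) ∧
    Filter.Tendsto hFun (nhdsWithin 0 (Set.Ioi 0)) (nhds (-1)) ∧
    Filter.Tendsto hFun (nhdsWithin 1 (Set.Iio 1)) (nhds (binEnt (2 / 3) - 1 / 3)) ∧
    0 < binEnt (2 / 3) - 1 / 3 ∧
    StrictConcaveOn ℝ (Set.Ioo (0 : ℝ) 1) hFun ∧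
    ∃! l : ℝ, l ∈ Set.Ioo (0 : ℝ) 1 ∧ hFun l = 0 := by
  have heq : ∀ x ∈ Set.Ioo (0:ℝ) 1, niceF x = hFun x :=
    fun x hx => (hFun_eq hx.1 hx.2).symm
  have hcont : ContinuousOn hFun (Set.Ioo (0 : ℝ) 1) :=
    (niceF_continuous.continuousOn).congr (fun x hx => (heq x hx).symm)
  have hmem0 : Set.Ioo (0:ℝ) 1 ∈ nhdsWithin 0 (Set.Ioi 0) := by
    rw [mem_nhdsWithin]
    exact ⟨Set.Iio 1, isOpen_Iio, by norm_num, fun x hx => ⟨hx.2, hx.1⟩⟩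
  have hmem1 : Set.Ioo (0:ℝ) 1 ∈ nhdsWithin 1 (Set.Iio 1) := by
    rw [mem_nhdsWithin]
    exact ⟨Set.Ioi 0, isOpen_Ioi, by norm_num, fun x hx => ⟨hx.1, hx.2⟩⟩
  have h0 : Filter.Tendsto hFun (nhdsWithin 0 (Set.Ioi 0)) (nhds (-1)) := by
    have : Filter.Tendsto niceF (nhdsWithin 0 (Set.Ioi 0)) (nhds (-1)) := by
      have := (niceF_continuous.tendsto 0).mono_left
        (nhdsWithin_le_nhds : nhdsWithin (0:ℝ) (Set.Ioi 0) ≤ nhds 0)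
      simpa [niceF, binEnt_zero] using this
    exact this.congr' (by filter_upwards [hmem0] with l hl using heq l hl)
  have hval : binEnt (2/3 : ℝ) - 1/3 = Real.logb 2 3 - 1 := by rw [binEnt_23]; ring
  have hposv : 0 < binEnt (2/3 : ℝ) - 1/3 := by
    rw [hval]; linarith [logb23_gt_one]
  have h1 : Filter.Tendsto hFun (nhdsWithin 1 (Set.Iio 1)) (nhds (binEnt (2/3) - 1/3)) := by
    have : Filter.Tendsto niceF (nhdsWithin 1 (Set.Iio 1)) (nhds (binEnt (2/3) - 1/3)) := by
      have := (niceF_continuous.tendsto 1).mono_left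
        (nhdsWithin_le_nhds : nhdsWithin (1:ℝ) (Set.Iio 1) ≤ nhds 1)
      rw [hval]
      simpa [niceF, binEnt_one] using this
    exact this.congr' (by filter_upwards [hmem1] with l hl using heq l hl)
  have hconc : StrictConcaveOn ℝ (Set.Ioo (0:ℝ) 1) hFun :=
    strictConcaveOn_congr niceF_strictConcave heq
  -- h(1/2) > 0
  have hhalf : 0 < hFun (1/2) := by
    rw [hFun_eq (by norm_num) (by norm_num), binEnt_half]
    nlinarith [logb23_gt_one]
  -- a negative point
  have hnegev : ∀ᶠ l in nhdsWithin 0 (Set.Ioi 0), hFun l < 0 ∧ l ∈ Set.Ioo (0:ℝ) (1/2) := by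
    have e1 : ∀ᶠ l in nhdsWithin 0 (Set.Ioi 0), hFun l < 0 :=
      h0.eventually (Filter.Tendsto.eventually_lt_const (by norm_num) Filter.tendsto_id)
    have e2 : Set.Ioo (0:ℝ) (1/2) ∈ nhdsWithin 0 (Set.Ioi 0) := by
      rw [mem_nhdsWithin]
      exact ⟨Set.Iio (1/2), isOpen_Iio, by norm_num, fun x hx => ⟨hx.2, hx.1⟩⟩
    exact e1.and e2
  obtain ⟨a, hna, ha0, ha12⟩ := hnegev.exists
  -- IVT
  have hsub : Set.Icc a (1/2 : ℝ) ⊆ Set.Ioo (0:ℝ) 1 := fun x hx =>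
    ⟨lt_of_lt_of_le ha0 hx.1, lt_of_le_of_lt hx.2 (by norm_num)⟩
  have hivt := intermediate_value_Icc (le_of_lt ha12) (hcont.mono hsub)
  obtain ⟨c, hcmem, hc0⟩ := hivt ⟨le_of_lt hna, le_of_lt hhalf⟩
  have hcIoo : c ∈ Set.Ioo (0:ℝ) 1 := hsub hcmem
  -- uniqueness helper: no two roots
  have huniq : ∀ x y : ℝ, x ∈ Set.Ioo (0:ℝ) 1 → y ∈ Set.Ioo (0:ℝ) 1 →
      hFun x = 0 → hFun y = 0 → x < y → False := by
    intro x y hx hy hfx hfy hxy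
    have hneg : ∀ z ∈ Set.Ioo y 1, hFun z < 0 := by
      intro z hz
      obtain ⟨hzy, hzlt1⟩ := hz
      have hz1 : z ∈ Set.Ioo (0:ℝ) 1 := ⟨lt_trans hy.1 hzy, hzlt1⟩
      have hzx : x < z := lt_trans hxy hzy
      set A := (z - y) / (z - x) with hA
      set B := (y - x) / (z - x) with hB
      have hzxpos : 0 < z - x := by linarith
      have hApos : 0 < A := div_pos (by linarith) hzxpos
      have hBpos : 0 < B := div_pos (by linarith) hzxpos
      have hab : A + B = 1 := by
        rw [hA, hB, ← add_div, div_eq_one_iff_eq hzxpos.ne']; ring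
      have hcomb : A • x + B • z = y := by
        simp only [smul_eq_mul, hA, hB]
        field_simp
        ring
      have := hconc.2 hx hz1 (ne_of_lt hzx) hApos hBpos hab
      rw [hcomb, hfy] at this
      simp only [smul_eq_mul, hfx] at this
      nlinarith
    have hev : ∀ᶠ z in nhdsWithin 1 (Set.Iio 1), hFun z ≤ 0 := by
      have : Set.Ioo y 1 ∈ nhdsWithin 1 (Set.Iio 1) := by
        rw [mem_nhdsWithin]
        exact ⟨Set.Ioi y, isOpen_Ioi, hy.2, fun w hw => ⟨hw.1, hw.2⟩⟩
      filter_upwards [this] with z hz using le_of_lt (hneg z hz)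
    have := le_of_tendsto h1 hev
    linarith
  refine ⟨hcont, h0, h1, hposv, hconc, c, ⟨hcIoo, hc0⟩, ?_⟩
  intro y ⟨hyIoo, hy0⟩
  rcases lt_trichotomy y c with h | h | h
  · exact absurd (huniq y c hyIoo hcIoo hy0 hc0 h) (fun f => f)
  · exact h
  · exact absurd (huniq c y hcIoo hyIoo hc0 hy0 h) (fun f => f)
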